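/- Let H : ℝ⁴ → ℝ be a smooth function and let I ⊆ ℛ_c(H) be an open interval. Then the set of s ∈ I such that H⁻¹(s) contains at most one closed orbit of X_H (i.e. any two closed orbits contained in H⁻¹(s) are equal as subsets of ℝ⁴) is a Lebesgue-measurable subset of ℝ. Equivalently, the set of s ∈ I such that H⁻¹(s) contains two distinct closed orbits is Lebesgue measurable (it is a countable union of compact sets intersected with I). -/

import Mathlib

/-!
Statement 12: For smooth `H : ℝ⁴ → ℝ` and an open interval `I ⊆ ℛ_c(H)`, the set of
`s ∈ I` whose level set `H⁻¹(s)` contains at most one closed orbit of `X_H` is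
Lebesgue measurable.
-/

open Set MeasureTheory

/-- The Hamiltonian vector field of `H : ℝ⁴ → ℝ` for the standard symplectic form
`dx₁∧dx₂ + dx₃∧dx₄`: `X_H(x) = (∂₂H, −∂₁H, ∂₄H, −∂₃H)`. -/
noncomputable def hamVF (H : (Fin 4 → ℝ) → ℝ) (x : Fin 4 → ℝ) : Fin 4 → ℝ :=
  ![fderiv ℝ H x (Pi.single (1 : Fin 4) (1 : ℝ)),
    -fderiv ℝ H x (Pi.single (0 : Fin 4) (1 : ℝ)),
    fderiv ℝ H x (Pi.single (3 : Fin 4) (1 : ℝ)),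
    -fderiv ℝ H x (Pi.single (2 : Fin 4) (1 : ℝ))]

/-- A trajectory of the Hamiltonian flow of `H`. -/
def IsTrajectory (H : (Fin 4 → ℝ) → ℝ) (γ : ℝ → Fin 4 → ℝ) : Prop :=
  ∀ t : ℝ, HasDerivAt γ (hamVF H (γ t)) t

/-- A closed orbit: the image of a nonconstant periodic trajectory. -/
def IsClosedOrbit (H : (Fin 4 → ℝ) → ℝ) (Γ : Set (Fin 4 → ℝ)) : Prop :=
  ∃ γ : ℝ → Fin 4 → ℝ, IsTrajectory H γ ∧ (∃ T > (0 : ℝ), ∀ t, γ (t + T) = γ t) ∧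
    (∃ t, γ t ≠ γ 0) ∧ Γ = Set.range γ

/-- `ℛ_c(H)`: regular values with compact level set. -/
def Rc (H : (Fin 4 → ℝ) → ℝ) : Set ℝ :=
  {s | IsCompact (H ⁻¹' {s}) ∧ ∀ x ∈ H ⁻¹' {s}, fderiv ℝ H x ≠ 0}

open Metric

section AuxLemmas

variable {H : (Fin 4 → ℝ) → ℝ}

theorem hamVF_contDiff (hH : ContDiff ℝ (⊤ : ℕ∞) H) : ContDiff ℝ (⊤ : ℕ∞) (hamVF H) := by
  have h1 : ContDiff ℝ (⊤ : ℕ∞) (fderiv ℝ H) := hH.fderiv_right (by simp)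
  have h2 : ∀ v : Fin 4 → ℝ, ContDiff ℝ (⊤ : ℕ∞) (fun x => fderiv ℝ H x v) := fun v =>
    (ContinuousLinearMap.apply ℝ ℝ v).contDiff.comp h1
  rw [contDiff_pi]
  intro i
  fin_cases i <;> simp [hamVF] <;>
    first
      | exact h2 _
      | exact (h2 _).neg

theorem fderiv_eq_zero_of_hamVF (x : Fin 4 → ℝ) (hx : hamVF H x = 0) : fderiv ℝ H x = 0 := by
  have hcomp : ∀ i : Fin 4, fderiv ℝ H x (Pi.single i 1) = 0 := by
    have h0 := congrFun hx 0
    have h1 := congrFun hx 1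
    have h2 := congrFun hx 2
    have h3 := congrFun hx 3
    simp [hamVF] at h0 h1 h2 h3
    intro i
    fin_cases i <;> assumption
  ext v
  have := LinearMap.pi_apply_eq_sum_univ ((fderiv ℝ H x) : (Fin 4 → ℝ) →ₗ[ℝ] ℝ) v
  simp only [ContinuousLinearMap.coe_coe] at this
  rw [ContinuousLinearMap.zero_apply]
  rw [this]
  apply Finset.sum_eq_zero
  intro i _
  have : (fun j => if i = j then (1:ℝ) else 0) = Pi.single i 1 := by
    funext j
    rw [Pi.single_apply]
    exact if_congr eq_comm rfl rfl
  rw [this]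
  simp [hcomp i]

theorem hamVF_lipschitzOnBall (hH : ContDiff ℝ (⊤ : ℕ∞) H) (R : ℝ) :
    ∃ K : NNReal, LipschitzOnWith K (hamVF H) (Metric.closedBall 0 R) := by
  have hX := hamVF_contDiff hH
  have hd : Differentiable ℝ (hamVF H) := hX.differentiable (by simp)
  have hfc : Continuous (fderiv ℝ (hamVF H)) := (hX.fderiv_right (m := (⊤:ℕ∞)) (by exact_mod_cast le_top)).continuous
  obtain ⟨C, hC⟩ := (isCompact_closedBall (0 : Fin 4 → ℝ) R).exists_bound_of_continuousOn
    hfc.continuousOn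
  refine ⟨C.toNNReal, (convex_closedBall (0 : Fin 4 → ℝ) R).lipschitzOnWith_of_nnnorm_hasFDerivWithin_le
    (f' := fderiv ℝ (hamVF H))
    (fun x _ => (hd x).hasFDerivAt.hasFDerivWithinAt) (fun x hx => ?_)⟩
  have := hC x hx
  simp only [← norm_toNNReal]
  exact Real.toNNReal_mono this

theorem IsTrajectory.continuous {γ : ℝ → Fin 4 → ℝ} (h : IsTrajectory H γ) : Continuous γ :=
  continuous_iff_continuousAt.2 fun t => (h t).continuousAt

theorem IsTrajectory.integral_eq (hH : ContDiff ℝ (⊤ : ℕ∞) H) {γ : ℝ → Fin 4 → ℝ}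
    (h : IsTrajectory H γ) (t : ℝ) :
    γ t = γ 0 + ∫ u in (0:ℝ)..t, hamVF H (γ u) := by
  have hcont : Continuous fun u => hamVF H (γ u) :=
    (hamVF_contDiff hH).continuous.comp h.continuous
  have := intervalIntegral.integral_eq_sub_of_hasDerivAt
    (f := γ) (f' := fun u => hamVF H (γ u)) (a := 0) (b := t)
    (fun u _ => h u) (hcont.intervalIntegrable 0 t)
  rw [this]
  abel

theorem isTrajectory_of_integral_eq (hH : ContDiff ℝ (⊤ : ℕ∞) H) {γ : ℝ → Fin 4 → ℝ}
    (hc : Continuous γ)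
    (h : ∀ t, γ t = γ 0 + ∫ u in (0:ℝ)..t, hamVF H (γ u)) : IsTrajectory H γ := by
  intro t
  have hcont : Continuous fun u => hamVF H (γ u) :=
    (hamVF_contDiff hH).continuous.comp hc
  have hF : HasDerivAt (fun x => ∫ u in (0:ℝ)..x, hamVF H (γ u)) (hamVF H (γ t)) t :=
    intervalIntegral.integral_hasDerivAt_right (hcont.intervalIntegrable 0 t)
      (hcont.stronglyMeasurableAtFilter _ _) hcont.continuousAt
  have : HasDerivAt (fun x => γ 0 + ∫ u in (0:ℝ)..x, hamVF H (γ u)) (hamVF H (γ t)) t :=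
    hF.const_add _
  exact this.congr_of_eventuallyEq (Filter.Eventually.of_forall fun x => h x)

theorem IsTrajectory.shift {γ : ℝ → Fin 4 → ℝ} (h : IsTrajectory H γ) (c : ℝ) :
    IsTrajectory H (fun t => γ (t + c)) := by
  intro t
  have h1 : HasDerivAt (fun u : ℝ => u + c) 1 t := (hasDerivAt_id t).add_const c
  have := HasDerivAt.scomp t (h (t + c)) h1
  simpa [Function.comp_def] using this

theorem IsTrajectory.lipschitz {γ : ℝ → Fin 4 → ℝ} (h : IsTrajectory H γ)
    {C : NNReal} (hb : ∀ t, ‖hamVF H (γ t)‖₊ ≤ C) : LipschitzWith C γ := by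
  apply lipschitzWith_of_nnnorm_deriv_le (fun t => (h t).differentiableAt)
  intro t
  rw [(h t).deriv]
  exact hb t

theorem IsTrajectory.eq_of_eq (hH : ContDiff ℝ (⊤ : ℕ∞) H) {γ δ : ℝ → Fin 4 → ℝ}
    (hγ : IsTrajectory H γ) (hδ : IsTrajectory H δ) {R : ℝ}
    (hγR : ∀ t, γ t ∈ Metric.closedBall (0 : Fin 4 → ℝ) R)
    (hδR : ∀ t, δ t ∈ Metric.closedBall (0 : Fin 4 → ℝ) R)
    {t₀ : ℝ} (heq : γ t₀ = δ t₀) : γ = δ := by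
  obtain ⟨K, hK⟩ := hamVF_lipschitzOnBall hH R
  funext t
  have hmem : t ∈ Ioo (min t t₀ - 1) (max t t₀ + 1) :=
    ⟨by nlinarith [min_le_left t t₀, le_max_left t t₀],
     by nlinarith [min_le_left t t₀, le_max_left t t₀]⟩
  have hmem₀ : t₀ ∈ Ioo (min t t₀ - 1) (max t t₀ + 1) :=
    ⟨by nlinarith [min_le_right t t₀, le_max_right t t₀],
     by nlinarith [min_le_right t t₀, le_max_right t t₀]⟩
  exact ODE_solution_unique_of_mem_Ioo (v := fun _ => hamVF H)
    (s := fun _ => Metric.closedBall 0 R) (fun _ _ => hK) hmem₀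
    (fun u _ => ⟨hγ u, hγR u⟩) (fun u _ => ⟨hδ u, hδR u⟩) heq hmem

theorem IsTrajectory.range_eq (hH : ContDiff ℝ (⊤ : ℕ∞) H) {γ δ : ℝ → Fin 4 → ℝ}
    (hγ : IsTrajectory H γ) (hδ : IsTrajectory H δ) {R : ℝ}
    (hγR : ∀ t, γ t ∈ Metric.closedBall (0 : Fin 4 → ℝ) R)
    (hδR : ∀ t, δ t ∈ Metric.closedBall (0 : Fin 4 → ℝ) R)
    (hmeet : ¬ Disjoint (Set.range γ) (Set.range δ)) : Set.range γ = Set.range δ := by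
  rw [Set.not_disjoint_iff] at hmeet
  obtain ⟨x, ⟨t₁, ht₁⟩, ⟨t₂, ht₂⟩⟩ := hmeet
  set δ' : ℝ → Fin 4 → ℝ := fun t => δ (t + (t₂ - t₁)) with hδ'def
  have hδ't : IsTrajectory H δ' := hδ.shift _
  have heq : γ t₁ = δ' t₁ := by simp [hδ'def, ht₁, ht₂]
  have : γ = δ' := IsTrajectory.eq_of_eq hH hγ hδ't hγR (fun t => hδR _) heq
  rw [this, hδ'def]
  exact Function.Surjective.range_comp (fun y => ⟨y - (t₂ - t₁), by ring⟩) δ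

end AuxLemmas

theorem continuous_integral_comp {X : (Fin 4 → ℝ) → Fin 4 → ℝ} (hX : Continuous X) (t : ℝ) :
    Continuous fun γ : C(ℝ, Fin 4 → ℝ) => ∫ u in (0:ℝ)..t, X (γ u) := by
  rw [continuous_iff_continuousAt]
  intro γ₀
  set J := uIcc (0:ℝ) t with hJ
  have hJc : IsCompact J := isCompact_uIcc
  have hK₀ : IsCompact (γ₀ '' J) := hJc.image γ₀.continuous
  set U := Metric.thickening 1 (γ₀ '' J) with hU
  have hUo : IsOpen U := Metric.isOpen_thickening
  have hsub : MapsTo γ₀ J U :=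
    fun u hu => Metric.self_subset_thickening one_pos _ (mem_image_of_mem _ hu)
  have hV : {γ : C(ℝ, Fin 4 → ℝ) | MapsTo γ J U} ∈ nhds γ₀ :=
    ContinuousMap.eventually_mapsTo hJc hUo hsub
  obtain ⟨C, hC⟩ := (hK₀.cthickening (r := (1:ℝ))).exists_bound_of_continuousOn
    hX.continuousOn
  apply intervalIntegral.tendsto_integral_filter_of_dominated_convergence
    (fun _ => C)
  · filter_upwards with γ
    exact (hX.comp γ.continuous).aestronglyMeasurable
  · filter_upwards [hV] with γ hγ
    filter_upwards with u hu
    exact hC _ (Metric.thickening_subset_cthickening _ _ (hγ (uIoc_subset_uIcc hu)))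
  · exact intervalIntegrable_const
  · filter_upwards with u _
    exact (hX.tendsto _).comp ((continuous_eval_const u).tendsto γ₀)

def LipBall (M : NNReal) (R : ℝ) : Set C(ℝ, Fin 4 → ℝ) :=
  {f | LipschitzWith M f ∧ ∀ t, ‖f t‖ ≤ R}

theorem isCompact_lipBall (M : NNReal) (R : ℝ) : IsCompact (LipBall M R) := by
  apply ArzelaAscoli.isCompact_of_equicontinuous
  · have himg : ContinuousMap.toFun '' LipBall M R =
        {g : ℝ → Fin 4 → ℝ | LipschitzWith M g ∧ ∀ t, ‖g t‖ ≤ R} := by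
      ext g
      constructor
      · rintro ⟨f, hf, rfl⟩; exact hf
      · rintro ⟨h1, h2⟩
        exact ⟨⟨g, h1.continuous⟩, ⟨h1, h2⟩, rfl⟩
    rw [himg]
    have hc1 : IsClosed {g : ℝ → Fin 4 → ℝ | LipschitzWith M g} := by
      have : {g : ℝ → Fin 4 → ℝ | LipschitzWith M g} =
          ⋂ (s : ℝ) (t : ℝ), {g : ℝ → Fin 4 → ℝ | edist (g s) (g t) ≤ M * edist s t} := by
        ext g; simp [LipschitzWith]
      rw [this]
      exact isClosed_iInter fun s => isClosed_iInter fun t =>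
        isClosed_le ((continuous_apply s).edist (continuous_apply t)) continuous_const
    have hc2 : IsClosed {g : ℝ → Fin 4 → ℝ | ∀ t, ‖g t‖ ≤ R} := by
      have : {g : ℝ → Fin 4 → ℝ | ∀ t, ‖g t‖ ≤ R} =
          ⋂ (t : ℝ), {g : ℝ → Fin 4 → ℝ | ‖g t‖ ≤ R} := by ext g; simp
      rw [this]
      exact isClosed_iInter fun t => isClosed_le (continuous_apply t).norm continuous_const
    apply IsCompact.of_isClosed_subset
      (isCompact_univ_pi (fun _ : ℝ => isCompact_closedBall (0 : Fin 4 → ℝ) R))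
    · exact hc1.inter hc2
    · intro g hg t _
      simpa [mem_closedBall, dist_eq_norm] using hg.2 t
  · intro t₀
    rw [Metric.equicontinuousAt_iff]
    intro ε hε
    refine ⟨ε / (M + 1), by positivity, fun t ht f => ?_⟩
    calc dist (f.1 t₀) (f.1 t) ≤ M * dist t₀ t := (f.2.1).dist_le_mul t₀ t
      _ ≤ M * (ε / (M + 1)) := by
          rw [dist_comm]
          exact mul_le_mul_of_nonneg_left ht.le (by positivity)
      _ < ε := by
          have hM : (M : ℝ) < M + 1 := by linarith
          calc (M : ℝ) * (ε / (M+1)) < (M+1) * (ε / (M+1)) := by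
                apply mul_lt_mul_of_pos_right hM (by positivity)
            _ = ε := by field_simp

theorem periodic_range_isCompact {γ : ℝ → Fin 4 → ℝ} (hc : Continuous γ) {T : ℝ} (hT : 0 < T)
    (hp : ∀ t, γ (t + T) = γ t) : IsCompact (Set.range γ) := by
  have hper : Function.Periodic γ T := hp
  rw [← hper.image_Icc hT 0]
  exact isCompact_Icc.image hc

theorem exists_pos_dist_of_disjoint {K₁ K₂ : Set (Fin 4 → ℝ)} (h₁ : IsCompact K₁)
    (h₂ : IsCompact K₂) (hn₁ : K₁.Nonempty) (hn₂ : K₂.Nonempty) (hd : Disjoint K₁ K₂) :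
    ∃ ε > 0, ∀ x ∈ K₁, ∀ y ∈ K₂, ε ≤ dist x y := by
  obtain ⟨z, hz, hzmin⟩ := (h₁.prod h₂).exists_isMinOn (hn₁.prod hn₂)
    (continuous_dist.comp (continuous_fst.prodMk continuous_snd)).continuousOn
  refine ⟨dist z.1 z.2, ?_, fun x hx y hy => hzmin (Set.mk_mem_prod hx hy)⟩
  rw [gt_iff_lt, dist_pos]
  intro hc
  have h1 : z.1 ∈ K₁ := hz.1
  have h2 : z.2 ∈ K₂ := hz.2
  rw [hc] at h1
  exact disjoint_left.mp hd h1 h2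

section Good

/-- The parametrizing data for a pair of separated closed orbits at levels in a subinterval. -/
abbrev ZData := ℝ × C(ℝ, Fin 4 → ℝ) × C(ℝ, Fin 4 → ℝ) × ℝ × ℝ

variable (H : (Fin 4 → ℝ) → ℝ) (a b : ℝ) (n : ℕ) (M : NNReal)

def goodSet : Set ZData :=
  (Icc (a + 1/(n+1)) (b - 1/(n+1)) ×ˢ LipBall M n ×ˢ LipBall M n ×ˢ
    Icc (1/(n+1) : ℝ) n ×ˢ Icc (1/(n+1) : ℝ) n)
  ∩ (⋂ t : ℝ, {z : ZData | H (z.2.1 t) = z.1})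
  ∩ (⋂ t : ℝ, {z : ZData | H (z.2.2.1 t) = z.1})
  ∩ (⋂ t : ℝ, {z : ZData | z.2.1 (t + z.2.2.2.1) = z.2.1 t})
  ∩ (⋂ t : ℝ, {z : ZData | z.2.2.1 (t + z.2.2.2.2) = z.2.2.1 t})
  ∩ (⋂ t : ℝ, ⋂ u : ℝ, {z : ZData | 1/(n+1) ≤ dist (z.2.1 t) (z.2.2.1 u)})
  ∩ (⋂ t : ℝ, {z : ZData | z.2.1 t = z.2.1 0 + ∫ u in (0:ℝ)..t, hamVF H (z.2.1 u)})
  ∩ (⋂ t : ℝ, {z : ZData | z.2.2.1 t = z.2.2.1 0 + ∫ u in (0:ℝ)..t, hamVF H (z.2.2.1 u)})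

theorem isCompact_goodSet (hH : ContDiff ℝ (⊤ : ℕ∞) H) : IsCompact (goodSet H a b n M) := by
  have hXc : Continuous (hamVF H) := (hamVF_contDiff hH).continuous
  have cs : Continuous fun z : ZData => z.1 := continuous_fst
  have cγ : Continuous fun z : ZData => z.2.1 := continuous_fst.comp continuous_snd
  have cδ : Continuous fun z : ZData => z.2.2.1 :=
    continuous_fst.comp (continuous_snd.comp continuous_snd)
  have cp : Continuous fun z : ZData => z.2.2.2.1 :=
    continuous_fst.comp (continuous_snd.comp (continuous_snd.comp continuous_snd))
  have cq : Continuous fun z : ZData => z.2.2.2.2 :=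
    continuous_snd.comp (continuous_snd.comp (continuous_snd.comp continuous_snd))
  have ceγ : ∀ t : ℝ, Continuous fun z : ZData => z.2.1 t := fun t =>
    (continuous_eval_const t).comp cγ
  have ceδ : ∀ t : ℝ, Continuous fun z : ZData => z.2.2.1 t := fun t =>
    (continuous_eval_const t).comp cδ
  have hprod : IsCompact (Icc (a + 1/(n+1)) (b - 1/(n+1)) ×ˢ LipBall M n ×ˢ LipBall M n ×ˢ
      Icc (1/(n+1) : ℝ) n ×ˢ Icc (1/(n+1) : ℝ) n) :=
    isCompact_Icc.prod ((isCompact_lipBall M n).prod ((isCompact_lipBall M n).prod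
      (isCompact_Icc.prod isCompact_Icc)))
  unfold goodSet
  rw [inter_assoc, inter_assoc, inter_assoc, inter_assoc, inter_assoc, inter_assoc]
  apply hprod.inter_right
  apply IsClosed.inter
  · exact isClosed_iInter fun t => isClosed_eq (hH.continuous.comp (ceγ t)) cs
  apply IsClosed.inter
  · exact isClosed_iInter fun t => isClosed_eq (hH.continuous.comp (ceδ t)) cs
  apply IsClosed.inter
  · refine isClosed_iInter fun t => isClosed_eq ?_ (ceγ t)
    exact continuous_eval.comp (cγ.prodMk (continuous_const.add cp))
  apply IsClosed.inter
  · refine isClosed_iInter fun t => isClosed_eq ?_ (ceδ t)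
    exact continuous_eval.comp (cδ.prodMk (continuous_const.add cq))
  apply IsClosed.inter
  · exact isClosed_iInter fun t => isClosed_iInter fun u =>
      isClosed_le continuous_const ((ceγ t).dist (ceδ u))
  apply IsClosed.inter
  · exact isClosed_iInter fun t => isClosed_eq (ceγ t)
      ((ceγ 0).add ((continuous_integral_comp hXc t).comp cγ))
  · exact isClosed_iInter fun t => isClosed_eq (ceδ t)
      ((ceδ 0).add ((continuous_integral_comp hXc t).comp cδ))

end Good

theorem at_most_one_closed_orbit_is_measurable
    (H : (Fin 4 → ℝ) → ℝ) (hH : ContDiff ℝ (⊤ : ℕ∞) H)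
    (a b : ℝ) (hI : Set.Ioo a b ⊆ Rc H) :
    NullMeasurableSet
      {s ∈ Set.Ioo a b | ∀ Γ₁ Γ₂ : Set (Fin 4 → ℝ),
        IsClosedOrbit H Γ₁ → Γ₁ ⊆ H ⁻¹' {s} →
        IsClosedOrbit H Γ₂ → Γ₂ ⊆ H ⁻¹' {s} → Γ₁ = Γ₂}
      volume := by
  classical
  have hXc : Continuous (hamVF H) := (hamVF_contDiff hH).continuous
  -- choose Lipschitz bounds on balls
  have hMex : ∀ n : ℕ, ∃ M : NNReal, ∀ x ∈ closedBall (0 : Fin 4 → ℝ) (n : ℝ),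
      ‖hamVF H x‖₊ ≤ M := by
    intro n
    obtain ⟨C, hC⟩ := (isCompact_closedBall (0 : Fin 4 → ℝ) (n : ℝ)).exists_bound_of_continuousOn
      hXc.continuousOn
    exact ⟨C.toNNReal, fun x hx => by
      rw [← norm_toNNReal]
      exact Real.toNNReal_mono (hC x hx)⟩
  choose M hM using hMex
  set Bad : Set ℝ := ⋃ n : ℕ, Prod.fst '' goodSet H a b n (M n) with hBad
  have hBadMeas : MeasurableSet Bad :=
    MeasurableSet.iUnion fun n =>
      (((isCompact_goodSet H a b n (M n) hH).image continuous_fst).isClosed).measurableSet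
  have hkey : {s ∈ Set.Ioo a b | ∀ Γ₁ Γ₂ : Set (Fin 4 → ℝ),
        IsClosedOrbit H Γ₁ → Γ₁ ⊆ H ⁻¹' {s} →
        IsClosedOrbit H Γ₂ → Γ₂ ⊆ H ⁻¹' {s} → Γ₁ = Γ₂} = Set.Ioo a b \ Bad := by
    ext s
    simp only [mem_sep_iff, mem_diff]
    constructor
    · rintro ⟨hs, hP⟩
      refine ⟨hs, ?_⟩
      -- a point of Bad admits two distinct closed orbits, contradicting hP
      rintro hsB
      simp only [hBad, mem_iUnion, mem_image] at hsB
      obtain ⟨n, z, hz, rfl⟩ := hsB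
      simp only [goodSet, mem_inter_iff, mem_iInter, mem_setOf_eq, mem_prod] at hz
      obtain ⟨⟨⟨⟨⟨⟨⟨⟨hzIcc, hγLip, hδLip, hpIcc, hqIcc⟩, hγH⟩, hδH⟩, hγper⟩, hδper⟩,
        hsep⟩, hγint⟩, hδint⟩ := hz
      have hγtraj : IsTrajectory H ⇑z.2.1 := isTrajectory_of_integral_eq hH z.2.1.continuous hγint
      have hδtraj : IsTrajectory H ⇑z.2.2.1 := isTrajectory_of_integral_eq hH z.2.2.1.continuous hδint
      have hpos : (0:ℝ) < 1/(n+1) := by positivity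
      have hsmem : z.1 ∈ Rc H := hI hs
      have hncγ : ∃ t, z.2.1 t ≠ z.2.1 0 := by
        by_contra hcc
        push_neg at hcc
        have hconst : ⇑z.2.1 = fun _ : ℝ => z.2.1 0 := funext hcc
        have h1 : HasDerivAt (fun _ : ℝ => z.2.1 0) (hamVF H (z.2.1 0)) 0 := by
          have h := hγtraj 0
          rwa [hconst] at h
        have h0 : hamVF H (z.2.1 0) = 0 := h1.unique (hasDerivAt_const 0 _)
        exact hsmem.2 (z.2.1 0) (by simpa [mem_preimage] using hγH 0)
          (fderiv_eq_zero_of_hamVF _ h0)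
      have hncδ : ∃ t, z.2.2.1 t ≠ z.2.2.1 0 := by
        by_contra hcc
        push_neg at hcc
        have hconst : ⇑z.2.2.1 = fun _ : ℝ => z.2.2.1 0 := funext hcc
        have h1 : HasDerivAt (fun _ : ℝ => z.2.2.1 0) (hamVF H (z.2.2.1 0)) 0 := by
          have h := hδtraj 0
          rwa [hconst] at h
        have h0 : hamVF H (z.2.2.1 0) = 0 := h1.unique (hasDerivAt_const 0 _)
        exact hsmem.2 (z.2.2.1 0) (by simpa [mem_preimage] using hδH 0)
          (fderiv_eq_zero_of_hamVF _ h0)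
      have horb1 : IsClosedOrbit H (Set.range ⇑z.2.1) :=
        ⟨⇑z.2.1, hγtraj, ⟨z.2.2.2.1, lt_of_lt_of_le hpos hpIcc.1, hγper⟩, hncγ, rfl⟩
      have horb2 : IsClosedOrbit H (Set.range ⇑z.2.2.1) :=
        ⟨⇑z.2.2.1, hδtraj, ⟨z.2.2.2.2, lt_of_lt_of_le hpos hqIcc.1, hδper⟩, hncδ, rfl⟩
      have hsub1 : Set.range ⇑z.2.1 ⊆ H ⁻¹' {z.1} := by
        rintro x ⟨t, rfl⟩
        simpa [mem_preimage] using hγH t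
      have hsub2 : Set.range ⇑z.2.2.1 ⊆ H ⁻¹' {z.1} := by
        rintro x ⟨t, rfl⟩
        simpa [mem_preimage] using hδH t
      have hne : Set.range ⇑z.2.1 ≠ Set.range ⇑z.2.2.1 := by
        intro hEq
        obtain ⟨u, hu⟩ : z.2.1 0 ∈ Set.range ⇑z.2.2.1 := hEq ▸ Set.mem_range_self 0
        have hle := hsep 0 u
        rw [hu, dist_self] at hle
        linarith
      exact hne (hP _ _ horb1 hsub1 horb2 hsub2)
    · rintro ⟨hs, hnB⟩
      refine ⟨hs, ?_⟩
      intro Γ₁ Γ₂ h1 h1s h2 h2s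
      by_contra hneq
      apply hnB
      obtain ⟨γ, hγtraj, ⟨T, hT, hγper⟩, hγnc, rfl⟩ := h1
      obtain ⟨δ, hδtraj, ⟨S, hS, hδper⟩, hδnc, rfl⟩ := h2
      obtain ⟨R₀, hR₀⟩ := (hI hs).1.isBounded.subset_closedBall 0
      have hγball : ∀ t, γ t ∈ closedBall (0 : Fin 4 → ℝ) R₀ := fun t =>
        hR₀ (h1s (Set.mem_range_self t))
      have hδball : ∀ t, δ t ∈ closedBall (0 : Fin 4 → ℝ) R₀ := fun t =>
        hR₀ (h2s (Set.mem_range_self t))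
      have hdisj : Disjoint (Set.range γ) (Set.range δ) := by
        by_contra hmeet
        exact hneq (IsTrajectory.range_eq hH hγtraj hδtraj hγball hδball hmeet)
      obtain ⟨ε, hε, hsep⟩ := exists_pos_dist_of_disjoint
        (periodic_range_isCompact hγtraj.continuous hT hγper)
        (periodic_range_isCompact hδtraj.continuous hS hδper)
        (Set.range_nonempty γ) (Set.range_nonempty δ) hdisj
      obtain ⟨n₀, hn₀⟩ := exists_nat_ge (max R₀ (max T S))
      have hminpos : 0 < min (min (s - a) (b - s)) (min (min T S) ε) := by
        have h1 := hs.1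
        have h2 := hs.2
        simp only [lt_min_iff]
        refine ⟨⟨by linarith, by linarith⟩, ⟨hT, hS⟩, hε⟩
      obtain ⟨n₁, hn₁⟩ := exists_nat_one_div_lt hminpos
      set n : ℕ := max n₀ n₁ with hn
      have hnn₁ : (1:ℝ)/(n+1) ≤ 1/(n₁+1) := by
        apply one_div_le_one_div_of_le (by positivity)
        have : (n₁:ℝ) ≤ n := Nat.cast_le.mpr (le_max_right _ _)
        linarith
      have hsmall : (1:ℝ)/(n+1) < min (min (s - a) (b - s)) (min (min T S) ε) :=
        lt_of_le_of_lt hnn₁ hn₁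
      simp only [lt_min_iff] at hsmall
      have hbig : max R₀ (max T S) ≤ (n:ℝ) :=
        le_trans hn₀ (Nat.cast_le.mpr (le_max_left _ _))
      have hR₀n : R₀ ≤ (n:ℝ) := le_trans (le_max_left _ _) hbig
      have hTn : T ≤ (n:ℝ) := le_trans (le_trans (le_max_left _ _) (le_max_right _ _)) hbig
      have hSn : S ≤ (n:ℝ) := le_trans (le_trans (le_max_right _ _) (le_max_right _ _)) hbig
      have hγnorm : ∀ t, ‖γ t‖ ≤ (n:ℝ) := fun t => by
        have := hγball t
        rw [mem_closedBall, dist_zero_right] at this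
        linarith
      have hδnorm : ∀ t, ‖δ t‖ ≤ (n:ℝ) := fun t => by
        have := hδball t
        rw [mem_closedBall, dist_zero_right] at this
        linarith
      have hγLip : LipschitzWith (M n) γ := hγtraj.lipschitz (fun t =>
        hM n (γ t) (by rw [mem_closedBall, dist_zero_right]; exact hγnorm t))
      have hδLip : LipschitzWith (M n) δ := hδtraj.lipschitz (fun t =>
        hM n (δ t) (by rw [mem_closedBall, dist_zero_right]; exact hδnorm t))
      rw [hBad, mem_iUnion]
      refine ⟨n, (s, ⟨γ, hγtraj.continuous⟩, ⟨δ, hδtraj.continuous⟩, T, S), ?_, rfl⟩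
      simp only [goodSet, mem_inter_iff, mem_iInter, mem_setOf_eq, mem_prod,
        ContinuousMap.coe_mk]
      refine ⟨⟨⟨⟨⟨⟨⟨⟨?_, ?_, ?_, ?_, ?_⟩, ?_⟩, ?_⟩, ?_⟩, ?_⟩, ?_⟩, ?_⟩, ?_⟩
      · exact ⟨by linarith [hsmall.1.1], by linarith [hsmall.1.2]⟩
      · exact ⟨hγLip, hγnorm⟩
      · exact ⟨hδLip, hδnorm⟩
      · exact ⟨le_of_lt hsmall.2.1.1, hTn⟩
      · exact ⟨le_of_lt hsmall.2.1.2, hSn⟩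
      · intro t
        have := h1s (Set.mem_range_self t)
        simpa [mem_preimage] using this
      · intro t
        have := h2s (Set.mem_range_self t)
        simpa [mem_preimage] using this
      · exact hγper
      · exact hδper
      · intro t u
        exact le_trans (le_of_lt hsmall.2.2)
          (hsep _ (Set.mem_range_self t) _ (Set.mem_range_self u))
      · exact fun t => hγtraj.integral_eq hH t
      · exact fun t => hδtraj.integral_eq hH t
  rw [hkey]
  exact (measurableSet_Ioo.diff hBadMeas).nullMeasurableSet
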